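/- Let p : ℝ^d → (0,∞), h : ℝ^d → ℝ and φ : ℝ^d → ℝ be infinitely differentiable, and let ĥ ∈ ℝ. Suppose −∑_{i=1}^d ∂/∂x_i ( p · ∂φ/∂x_i ) = (h − ĥ) p everywhere on ℝ^d. For a finite sequence σ = (σ(1),…,σ(l)) ∈ {1,…,d}^l write ∇^l_σ φ = ∂^l φ / ∂x_{σ(1)}⋯∂x_{σ(l)}. Define functions G^l_σ recursively by G¹_{(σ(1))} = ∑_{i=1}^d (∂²(log p)/∂x_i∂x_{σ(1)}) (∂φ/∂x_i) + ∂h/∂x_{σ(1)}, and for l ≥ 2, G^l_σ = ∑_{i=1}^d (∂²(log p)/∂x_i∂x_{σ(l)}) · ∂/∂x_i( ∇^{l−1}_{σ|_{1:l−1}} φ ) + ∂ G^{l−1}_{σ|_{1:l−1}} / ∂x_{σ(l)}, where σ|_{1:l−1} = (σ(1),…,σ(l−1)). Then for every l ≥ 1 and every σ ∈ {1,…,d}^l, −∑_{i=1}^d ∂/∂x_i ( p · ∂(∇^l_σ φ)/∂x_i ) = G^l_σ · p everywhere on ℝ^d. -/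

import Mathlib

open scoped ContDiff

/-- Partial derivative `∂f/∂x_i` of a scalar function on `ℝ^d`. -/
noncomputable def pd {d : ℕ} (i : Fin d) (f : (Fin d → ℝ) → ℝ) (x : Fin d → ℝ) : ℝ :=
  fderiv ℝ f x (Pi.single i 1)

/-- Iterated partial derivative `∇^l_σ f = ∂^l f/∂x_{σ(1)}⋯∂x_{σ(l)}`. -/
noncomputable def iterD {d : ℕ} :
    (l : ℕ) → (Fin l → Fin d) → ((Fin d → ℝ) → ℝ) → ((Fin d → ℝ) → ℝ)
  | 0, _, f => f
  | l + 1, σ, f => pd (σ (Fin.last l)) (iterD l (σ ∘ Fin.castSucc) f)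

/-- The functions `G^l_σ` of the paper (Lemma 2, Appendix D), defined recursively:
`G¹_{σ(1)} = ∑_i ∂²_{i,σ(1)}(log p) ∂_i φ + ∂_{σ(1)} h` and
`G^l_σ = ∑_i ∂²_{i,σ(l)}(log p) ∂_i (∇^{l−1}_{σ|_{1:l−1}} φ) + ∂_{σ(l)} G^{l−1}_{σ|_{1:l−1}}`.
Here `Gfun p h φ l σ` with `σ : Fin (l+1) → Fin d` is `G^{l+1}_σ`. -/
noncomputable def Gfun {d : ℕ} (p h φ : (Fin d → ℝ) → ℝ) :
    (l : ℕ) → (Fin (l + 1) → Fin d) → (Fin d → ℝ) → ℝ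
  | 0, σ => fun x =>
      (∑ i, pd i (pd (σ 0) (fun y => Real.log (p y))) x * pd i φ x) + pd (σ 0) h x
  | l + 1, σ => fun x =>
      (∑ i, pd i (pd (σ (Fin.last (l + 1))) (fun y => Real.log (p y))) x *
          pd i (iterD (l + 1) (σ ∘ Fin.castSucc) φ) x)
        + pd (σ (Fin.last (l + 1))) (Gfun p h φ l (σ ∘ Fin.castSucc)) x

section Helpers

variable {d : ℕ}

lemma contDiff_pd {f : (Fin d → ℝ) → ℝ} (hf : ContDiff ℝ ∞ f) (i : Fin d) :
    ContDiff ℝ ∞ (pd i f) := by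
  have h1 : ContDiff ℝ ∞ (fderiv ℝ f) := hf.fderiv_right (by norm_num)
  exact h1.clm_apply contDiff_const

lemma pd_mul {f g : (Fin d → ℝ) → ℝ} {x : Fin d → ℝ} (i : Fin d)
    (hf : DifferentiableAt ℝ f x) (hg : DifferentiableAt ℝ g x) :
    pd i (fun y => f y * g y) x = pd i f x * g x + f x * pd i g x := by
  simp only [pd, fderiv_fun_mul hf hg, ContinuousLinearMap.add_apply,
    ContinuousLinearMap.smul_apply, smul_eq_mul]
  ring

lemma pd_add {f g : (Fin d → ℝ) → ℝ} {x : Fin d → ℝ} (i : Fin d)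
    (hf : DifferentiableAt ℝ f x) (hg : DifferentiableAt ℝ g x) :
    pd i (fun y => f y + g y) x = pd i f x + pd i g x := by
  simp only [pd, fderiv_fun_add hf hg, ContinuousLinearMap.add_apply]

lemma pd_sum {ι : Type*} (s : Finset ι) (F : ι → (Fin d → ℝ) → ℝ) {x : Fin d → ℝ} (i : Fin d)
    (hF : ∀ k ∈ s, DifferentiableAt ℝ (F k) x) :
    pd i (fun y => ∑ k ∈ s, F k y) x = ∑ k ∈ s, pd i (F k) x := by
  simp only [pd]
  rw [fderiv_fun_sum hF]
  simp

lemma pd_neg {f : (Fin d → ℝ) → ℝ} {x : Fin d → ℝ} (i : Fin d) :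
    pd i (fun y => -f y) x = -pd i f x := by
  simp only [pd, fderiv_neg]
  simp

lemma pd_sub_const {f : (Fin d → ℝ) → ℝ} {x : Fin d → ℝ} (i : Fin d) (c : ℝ) :
    pd i (fun y => f y - c) x = pd i f x := by
  simp only [pd, fderiv_sub_const]

lemma pd_comm {f : (Fin d → ℝ) → ℝ} (hf : ContDiff ℝ ∞ f) (i j : Fin d) (x : Fin d → ℝ) :
    pd i (pd j f) x = pd j (pd i f) x := by
  have hf' : ContDiff ℝ ∞ (fderiv ℝ f) := hf.fderiv_right (by norm_num)
  have hd : ∀ y, HasFDerivAt f (fderiv ℝ f y) y := fun y =>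
    ((hf.differentiable (by norm_num)) y).hasFDerivAt
  have hd2 : HasFDerivAt (fderiv ℝ f) (fderiv ℝ (fderiv ℝ f) x) x :=
    ((hf'.differentiable (by norm_num)) x).hasFDerivAt
  have hsym := second_derivative_symmetric hd hd2 (Pi.single i 1) (Pi.single j 1)
  have key : ∀ (a b : Fin d), pd a (pd b f) x =
      fderiv ℝ (fderiv ℝ f) x (Pi.single a 1) (Pi.single b 1) := by
    intro a b
    have : pd b f = fun y => fderiv ℝ f y (Pi.single b 1) := rfl
    rw [show pd a (pd b f) x = fderiv ℝ (fun y => fderiv ℝ f y (Pi.single b 1)) x (Pi.single a 1) from rfl]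
    rw [fderiv_clm_apply ((hf'.differentiable (by norm_num)) x) (differentiableAt_const _)]
    simp
  rw [key, key]
  exact hsym

lemma pd_log {p : (Fin d → ℝ) → ℝ} (hp : ContDiff ℝ ∞ p) (hpos : ∀ x, 0 < p x)
    (j : Fin d) (x : Fin d → ℝ) :
    pd j (fun y => Real.log (p y)) x = pd j p x / p x := by
  have h := (((hp.differentiable (by norm_num)) x).hasFDerivAt).log (hpos x).ne'
  simp only [pd, h.fderiv, ContinuousLinearMap.smul_apply, smul_eq_mul]
  rw [div_eq_inv_mul]

lemma alg {d : ℕ} (A B E P R : Fin d → ℝ) (C J q G : ℝ) (hq : q ≠ 0)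
    (H1 : -∑ i, (A i * B i + C * E i + P i) = J * q + G * C)
    (H2 : -∑ i, (R i * B i + q * E i) = G * q) :
    -∑ i, P i = ((∑ i, (A i / q - C * R i / q ^ 2) * B i) + J) * q := by
  have e1 : ∑ i, (A i * B i + C * E i + P i)
      = (∑ i, A i * B i) + C * (∑ i, E i) + ∑ i, P i := by
    rw [Finset.sum_add_distrib, Finset.sum_add_distrib, Finset.mul_sum]
  have e2 : ∑ i, (R i * B i + q * E i) = (∑ i, R i * B i) + q * (∑ i, E i) := by
    rw [Finset.sum_add_distrib, Finset.mul_sum]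
  have e3 : ∑ i, (A i / q - C * R i / q ^ 2) * B i
      = (∑ i, A i * B i) * q⁻¹ - (∑ i, R i * B i) * (C / q ^ 2) := by
    rw [show (∑ i, (A i / q - C * R i / q ^ 2) * B i)
        = ∑ i, ((A i * B i) * q⁻¹ - (R i * B i) * (C / q ^ 2)) from
      Finset.sum_congr rfl fun i _ => by ring]
    rw [Finset.sum_sub_distrib, ← Finset.sum_mul, ← Finset.sum_mul]
  rw [e3]
  rw [e1] at H1; rw [e2] at H2
  set S1 := ∑ i, A i * B i
  set S2 := ∑ i, R i * B i
  set S3 := ∑ i, E i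
  set SP := ∑ i, P i
  field_simp
  linear_combination q * H1 - C * H2

/-- The key induction step: differentiating the Poisson equation. -/
lemma step (p g ψ : (Fin d → ℝ) → ℝ) (hp : ContDiff ℝ ∞ p) (hg : ContDiff ℝ ∞ g)
    (hψ : ContDiff ℝ ∞ ψ) (hppos : ∀ x, 0 < p x)
    (E : ∀ x, -∑ i, pd i (fun y => p y * pd i ψ y) x = g x * p x) (j : Fin d) (x : Fin d → ℝ) :
    -∑ i, pd i (fun y => p y * pd i (pd j ψ) y) x
      = ((∑ i, pd i (pd j (fun y => Real.log (p y))) x * pd i ψ x) + pd j g x) * p x := by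
  have hinf : ((∞ : WithTop ℕ∞) ≤ ∞) := le_refl _
  have Dp : Differentiable ℝ p := hp.differentiable (by norm_num)
  have Dg : Differentiable ℝ g := hg.differentiable (by norm_num)
  have Dψ : Differentiable ℝ ψ := hψ.differentiable (by norm_num)
  have hpdψ : ∀ i : Fin d, ContDiff ℝ ∞ (pd i ψ) := contDiff_pd hψ
  have hfi : ∀ i : Fin d, ContDiff ℝ ∞ (fun y => p y * pd i ψ y) :=
    fun i => hp.mul (hpdψ i)
  -- differentiate E with respect to x_j
  have hE' : pd j (fun x => -∑ i, pd i (fun y => p y * pd i ψ y) x) x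
      = pd j (fun x => g x * p x) x := by
    congr 1
    exact funext E
  have hrhs : pd j (fun x => g x * p x) x = pd j g x * p x + g x * pd j p x :=
    pd_mul j (Dg x) (Dp x)
  have hlhs1 : pd j (fun x => -∑ i, pd i (fun y => p y * pd i ψ y) x) x
      = -∑ i, pd j (pd i (fun y => p y * pd i ψ y)) x := by
    rw [pd_neg]
    congr 1
    exact pd_sum Finset.univ _ j fun k _ => ((contDiff_pd (hfi k) k).differentiable (by norm_num)) x
  -- swap derivatives and use the product rule
  have hswap : ∀ i : Fin d, pd j (pd i (fun y => p y * pd i ψ y)) x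
      = pd i (fun y => pd j p y * pd i ψ y) x + pd i (fun y => p y * pd i (pd j ψ) y) x := by
    intro i
    rw [pd_comm (hfi i) j i x]
    have hrw : pd j (fun y => p y * pd i ψ y)
        = fun y => pd j p y * pd i ψ y + p y * pd i (pd j ψ) y := by
      funext y
      rw [pd_mul j (Dp y) (((hpdψ i).differentiable (by norm_num)) y),
        pd_comm hψ j i y]
    rw [hrw]
    exact pd_add i
      (((contDiff_pd hp j).mul (hpdψ i)).differentiable (by norm_num) x)
      ((hp.mul (contDiff_pd (contDiff_pd hψ j) i)).differentiable (by norm_num) x)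
  -- expand terms
  have hA : ∀ i : Fin d, pd i (fun y => pd j p y * pd i ψ y) x
      = pd i (pd j p) x * pd i ψ x + pd j p x * pd i (pd i ψ) x := by
    intro i
    exact pd_mul i (((contDiff_pd hp j).differentiable (by norm_num)) x)
      (((hpdψ i).differentiable (by norm_num)) x)
  -- expand E at x
  have hEx : -∑ i, (pd i p x * pd i ψ x + p x * pd i (pd i ψ) x) = g x * p x := by
    rw [← E x]
    congr 1
    refine Finset.sum_congr rfl fun i _ => ?_
    exact (pd_mul i (Dp x) (((hpdψ i).differentiable (by norm_num)) x)).symm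
  -- express second derivative of log p
  have hlog2 : ∀ i : Fin d, pd i (pd j (fun y => Real.log (p y))) x
      = pd i (pd j p) x / p x - pd j p x * pd i p x / (p x) ^ 2 := by
    intro i
    have hL : ContDiff ℝ ∞ (pd j (fun y => Real.log (p y))) :=
      contDiff_pd (hp.log fun y => (hppos y).ne') j
    have hprod : (fun y => p y * pd j (fun z => Real.log (p z)) y) = pd j p := by
      funext y
      rw [pd_log hp hppos j y, mul_div_cancel₀ _ (hppos y).ne']
    have hthis := pd_mul i (Dp x) ((hL.differentiable (by norm_num)) x)
    rw [hprod] at hthis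
    rw [pd_log hp hppos j x] at hthis
    have hne := (hppos x).ne'
    field_simp at hthis ⊢
    linear_combination (-1 : ℝ) * hthis
  -- assemble
  have H1 : -∑ i, (pd i (pd j p) x * pd i ψ x + pd j p x * pd i (pd i ψ) x
      + pd i (fun y => p y * pd i (pd j ψ) y) x) = pd j g x * p x + g x * pd j p x := by
    rw [← hrhs, ← hE', hlhs1]
    congr 1
    refine Finset.sum_congr rfl fun i _ => ?_
    rw [hswap i, hA i]
  have goal2 : -∑ i, pd i (fun y => p y * pd i (pd j ψ) y) x
      = ((∑ i, (pd i (pd j p) x / p x - pd j p x * pd i p x / (p x) ^ 2) * pd i ψ x)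
        + pd j g x) * p x :=
    alg (fun i => pd i (pd j p) x) (fun i => pd i ψ x) (fun i => pd i (pd i ψ) x)
      (fun i => pd i (fun y => p y * pd i (pd j ψ) y) x) (fun i => pd i p x)
      (pd j p x) (pd j g x) (p x) (g x) (hppos x).ne' H1 hEx
  rw [goal2]
  congr 2
  refine (Finset.sum_congr rfl fun i _ => ?_)
  rw [hlog2 i]

lemma contDiff_iterD {φ : (Fin d → ℝ) → ℝ} (hφ : ContDiff ℝ ∞ φ) :
    ∀ (l : ℕ) (σ : Fin l → Fin d), ContDiff ℝ ∞ (iterD l σ φ)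
  | 0, _ => hφ
  | l + 1, σ => contDiff_pd (contDiff_iterD hφ l (σ ∘ Fin.castSucc)) _

lemma contDiff_G {p h φ : (Fin d → ℝ) → ℝ} (hp : ContDiff ℝ ∞ p) (hh : ContDiff ℝ ∞ h)
    (hφ : ContDiff ℝ ∞ φ) (hppos : ∀ x, 0 < p x) :
    ∀ (l : ℕ) (σ : Fin (l + 1) → Fin d), ContDiff ℝ ∞ (Gfun p h φ l σ) := by
  intro l
  induction l with
  | zero =>
    intro σ
    refine ContDiff.add ?_ (contDiff_pd hh _)
    exact ContDiff.sum fun i _ =>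
      (contDiff_pd (contDiff_pd (hp.log fun y => (hppos y).ne') _) _).mul (contDiff_pd hφ _)
  | succ l ih =>
    intro σ
    refine ContDiff.add ?_ (contDiff_pd (ih (σ ∘ Fin.castSucc)) _)
    exact ContDiff.sum fun i _ =>
      (contDiff_pd (contDiff_pd (hp.log fun y => (hppos y).ne') _) _).mul
        (contDiff_pd (contDiff_iterD hφ (l + 1) (σ ∘ Fin.castSucc)) _)

end Helpers

/-- Lemma 2 of the paper, Appendix D.
If `p, h, φ` are smooth, `p > 0`, and `−∑_i ∂_i(p ∂_i φ) = (h − ĥ)p` on `ℝ^d`, then for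
every `l ≥ 1` and every multi-index `σ ∈ {1,…,d}^l`,
`−∑_i ∂_i(p ∂_i(∇^l_σ φ)) = G^l_σ · p` on `ℝ^d`. -/
theorem stmt12 {d : ℕ} (p h φ : (Fin d → ℝ) → ℝ)
    (hp : ContDiff ℝ ∞ p) (hh : ContDiff ℝ ∞ h) (hφ : ContDiff ℝ ∞ φ)
    (hppos : ∀ x, 0 < p x) (hhat : ℝ)
    (heq : ∀ x : Fin d → ℝ,
      -∑ i, pd i (fun y => p y * pd i φ y) x = (h x - hhat) * p x) :
    ∀ (l : ℕ) (σ : Fin (l + 1) → Fin d) (x : Fin d → ℝ),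
      -∑ i, pd i (fun y => p y * pd i (iterD (l + 1) σ φ) y) x
        = Gfun p h φ l σ x * p x := by
  intro l
  induction l with
  | zero =>
    intro σ x
    have hg : ContDiff ℝ ∞ (fun y => h y - hhat) := hh.sub contDiff_const
    have hstep := step p (fun y => h y - hhat) φ hp hg hφ hppos heq (σ 0) x
    have h1 : iterD 1 σ φ = pd (σ 0) φ := by
      show pd (σ (Fin.last 0)) (iterD 0 (σ ∘ Fin.castSucc) φ) = pd (σ 0) φ
      rfl
    rw [h1]
    rw [hstep]
    show _ = (Gfun p h φ 0 σ x) * p x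
    simp only [Gfun]
    rw [pd_sub_const]
  | succ l ih =>
    intro σ x
    have hstep := step p (Gfun p h φ l (σ ∘ Fin.castSucc)) (iterD (l + 1) (σ ∘ Fin.castSucc) φ)
      hp (contDiff_G hp hh hφ hppos l (σ ∘ Fin.castSucc))
      (contDiff_iterD hφ (l + 1) (σ ∘ Fin.castSucc)) hppos
      (ih (σ ∘ Fin.castSucc)) (σ (Fin.last (l + 1))) x
    have h1 : iterD (l + 2) σ φ
        = pd (σ (Fin.last (l + 1))) (iterD (l + 1) (σ ∘ Fin.castSucc) φ) := rfl
    rw [h1, hstep]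
    rfl
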